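/- Let V be a vector space of dimension n over a field of characteristic zero. If r ≤ n, then the algebra homomorphism from the group algebra K[Sym_r] to End(V^{⊗r}) given by place permutations is injective. -/

import Mathlib

open scoped TensorProduct

theorem stmt_2 (K V : Type*) [Field K] [CharZero K] [AddCommGroup V] [Module K V]
    [FiniteDimensional K V] (n r : ℕ) (hn : Module.finrank K V = n) (hr : r ≤ n)
    (μ : MonoidAlgebra K (Equiv.Perm (Fin r)) →ₐ[K] Module.End K (⨂[K] (_ : Fin r), V))
    (hμ : ∀ (w : Equiv.Perm (Fin r)) (v : Fin r → V),
      μ (MonoidAlgebra.of K (Equiv.Perm (Fin r)) w) (⨂ₜ[K] i, v i) = ⨂ₜ[K] i, v (w⁻¹ i)) :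
    Function.Injective μ := by
  rw [injective_iff_map_eq_zero]
  intro x hx
  set b : Module.Basis (Fin n) K V := Module.finBasisOfFinrankEq K V hn with hb
  have hemb : Function.Injective (Fin.castLE hr) := Fin.castLE_injective hr
  ext w₀
  -- goal: x w₀ = 0
  set f₀ : Fin r → Fin n := fun i => Fin.castLE hr (w₀⁻¹ i) with hf₀
  set φ : (⨂[K] (_ : Fin r), V) →ₗ[K] K :=
    PiTensorProduct.lift ((MultilinearMap.mkPiAlgebra K (Fin r) K).compLinearMap
      (fun i => b.coord (f₀ i))) with hφ
  have hφt : ∀ v : Fin r → V, φ (⨂ₜ[K] i, v i) = ∏ i, b.coord (f₀ i) (v i) := by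
    intro v
    simp [hφ]
  have hx2 : μ x (⨂ₜ[K] i, b (Fin.castLE hr i)) =
      ∑ w ∈ x.coeff.support, x.coeff w • (⨂ₜ[K] i, b (Fin.castLE hr (w⁻¹ i))) := by
    conv_lhs => rw [← MonoidAlgebra.sum_coeff_single x]
    rw [Finsupp.sum, map_sum]
    simp only [LinearMap.sum_apply, Finset.sum_apply]
    refine Finset.sum_congr rfl fun w hw => ?_
    have : (MonoidAlgebra.single w (x.coeff w) : MonoidAlgebra K (Equiv.Perm (Fin r)))
        = x.coeff w • MonoidAlgebra.of K (Equiv.Perm (Fin r)) w := by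
      simp [MonoidAlgebra.of_apply, MonoidAlgebra.smul_single']
    rw [this, map_smul]
    simp only [LinearMap.smul_apply]
    rw [hμ]
  have hcoord : ∀ j j' : Fin n, b.coord j (b j') = if j' = j then 1 else 0 := by
    intro j j'
    simp [Module.Basis.coord_apply, Module.Basis.repr_self, Finsupp.single_apply]
  have key : ∑ w ∈ x.coeff.support, x.coeff w * (if w = w₀ then 1 else 0) = (0 : K) := by
    have h0 : φ (μ x (⨂ₜ[K] i, b (Fin.castLE hr i))) = 0 := by
      rw [hx]; simp
    rw [hx2, map_sum] at h0
    refine Eq.trans (Finset.sum_congr rfl fun w hw => ?_) h0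
    rw [map_smul, hφt, smul_eq_mul]
    congr 1
    by_cases h : w = w₀
    · subst h
      rw [if_pos rfl]
      symm
      refine Finset.prod_eq_one fun i _ => ?_
      rw [hcoord, if_pos rfl]
    · rw [if_neg h]
      have : ∃ i, Fin.castLE hr (w⁻¹ i) ≠ f₀ i := by
        by_contra hc
        push_neg at hc
        apply h
        exact inv_injective (Equiv.ext fun i => hemb (hc i))
      obtain ⟨i, hi⟩ := this
      symm
      refine Finset.prod_eq_zero (Finset.mem_univ i) ?_
      rw [hcoord, if_neg hi]
  by_cases hw₀ : w₀ ∈ x.coeff.support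
  · rw [Finset.sum_eq_single w₀ (fun w _ hne => by rw [if_neg hne, mul_zero])
      (fun h => absurd hw₀ h)] at key
    rw [if_pos rfl, mul_one] at key
    exact key
  · simpa using Finsupp.notMem_support_iff.mp hw₀
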